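/- Let V be a vertex ring and suppose a, b ∈ V satisfy a(n)b = δ_{n,-1} 𝟙 for all n ∈ ℤ (i.e., Y(a, z)b = 𝟙). Then also b(n)a = δ_{n,-1} 𝟙 for all n, and both a and b lie in the center C(V). -/
import Mathlib


noncomputable section

/-- Binomial coefficient `C(m, n)` for integer `m` and natural `n`:
`C(m,n) = m(m-1)⋯(m-n+1)/n!`. -/
def ibin (m : ℤ) (n : ℕ) : ℤ :=
  if 0 ≤ m then ((m.toNat.choose n : ℕ) : ℤ)
  else (-1) ^ n * ((((n : ℤ) - m - 1).toNat.choose n : ℕ) : ℤ)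

/-- Binomial coefficient `C(m, n)` for integers `m, n`, zero when `n < 0`. -/
def ibinZ (m n : ℤ) : ℤ := if 0 ≤ n then ibin m n.toNat else 0

/-- A vertex ring structure on an additive abelian group `V`: biadditive
products `mul n u v = u(n)v` for all `n : ℤ`, a vacuum element `one = 𝟙`,
satisfying truncation, the vacuum axioms, and the Jacobi identity. -/
structure VertexRing (V : Type*) [AddCommGroup V] where
  mul : ℤ → V → V → V
  one : V
  add_left : ∀ (n : ℤ) (u u' v : V), mul n (u + u') v = mul n u v + mul n u' v
  add_right : ∀ (n : ℤ) (u v v' : V), mul n u (v + v') = mul n u v + mul n u v'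
  trunc : ∀ u v : V, ∃ n₀ : ℤ, 0 ≤ n₀ ∧ ∀ n : ℤ, n₀ ≤ n → mul n u v = 0
  vac_create : ∀ u : V, mul (-1) u one = u
  vac_ann : ∀ (u : V) (n : ℤ), 0 ≤ n → mul n u one = 0
  jacobi : ∀ (r s t : ℤ) (u v w : V),
      (∑ᶠ i : ℕ, ibin r i • mul (r + s - (i : ℤ)) (mul (t + (i : ℤ)) u v) w) =
      (∑ᶠ i : ℕ, ((-1) ^ i * ibin t i) •
        (mul (r + t - (i : ℤ)) u (mul (s + (i : ℤ)) v w)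
          - (((-1 : ℤˣ) ^ t : ℤˣ) : ℤ) • mul (s + t - (i : ℤ)) v (mul (r + (i : ℤ)) u w)))

/-- The canonical Hasse–Schmidt derivation of a vertex ring: `D m u = u(-m-1)𝟙`. -/
def VertexRing.D {V : Type*} [AddCommGroup V] (R : VertexRing V) (m : ℕ) (u : V) : V :=
  R.mul (-(m : ℤ) - 1) u R.one

/-- The center of a vertex ring: states whose vertex operator is the constant
`u(-1)`, i.e. `u(n) = 0` for all `n ≠ -1`. -/
def VertexRing.center {V : Type*} [AddCommGroup V] (R : VertexRing V) : Set V :=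
  {u | ∀ n : ℤ, n ≠ -1 → ∀ v : V, R.mul n u v = 0}

/- ### helper lemmas on `ibin` -/

lemma VRaux_ibin_zero_right (m : ℤ) : ibin m 0 = 1 := by
  unfold ibin; split <;> simp

lemma VRaux_ibin_zero_left (i : ℕ) : ibin 0 i = if i = 0 then 1 else 0 := by
  unfold ibin
  rw [if_pos le_rfl]
  cases i <;> simp [Nat.choose]

lemma VRaux_ibin_negSucc (j i : ℕ) : ibin (-1 - (j : ℤ)) i = (-1) ^ i * ((i + j).choose i : ℤ) := by
  unfold ibin
  rw [if_neg (by omega)]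
  congr 3
  omega

lemma VRaux_ibin_neg_one (i : ℕ) : ibin (-1) i = (-1) ^ i := by
  have h := VRaux_ibin_negSucc 0 i
  norm_num at h
  have h2 : (-1 : ℤ) = -1 - ((0:ℕ):ℤ) := by norm_num
  rw [h2, VRaux_ibin_negSucc 0 i]
  norm_num

/- ### units of ℤ -/

lemma VRaux_unit_smul_smul {V : Type*} [AddCommGroup V] (e : ℤˣ) (x : V) :
    (e : ℤ) • (e : ℤ) • x = x := by
  rw [smul_smul, ← Units.val_mul, Int.units_mul_self e, Units.val_one, one_smul]

lemma VRaux_unit_smul_eq_zero {V : Type*} [AddCommGroup V] (e : ℤˣ) (x : V)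
    (hx : (e : ℤ) • x = 0) : x = 0 := by
  rw [← VRaux_unit_smul_smul e x, hx, smul_zero]

lemma VRaux_neg_one_zpow_neg_natCast (m : ℕ) :
    (((-1 : ℤˣ) ^ (-(m:ℤ)) : ℤˣ) : ℤ) = (-1) ^ m := by
  rw [zpow_neg, zpow_natCast]
  have : ((-1 : ℤˣ) ^ m)⁻¹ = (-1 : ℤˣ) ^ m := by
    rcases Nat.even_or_odd m with hm | hm
    · rw [hm.neg_one_pow]; rfl
    · rw [hm.neg_one_pow]; rfl
  rw [this]
  rcases Nat.even_or_odd m with hm | hm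
  · rw [hm.neg_one_pow, hm.neg_one_pow]; rfl
  · rw [hm.neg_one_pow, hm.neg_one_pow]; rfl

namespace VertexRing

variable {V : Type*} [AddCommGroup V] (R : VertexRing V)

/- ### basic consequences of biadditivity -/

lemma mul_zero_right' (n : ℤ) (u : V) : R.mul n u 0 = 0 := by
  have h := R.add_right n u 0 0
  rw [add_zero] at h
  exact (left_eq_add.mp h)

lemma mul_zero_left' (n : ℤ) (w : V) : R.mul n 0 w = 0 := by
  have h := R.add_left n 0 0 w
  rw [add_zero] at h
  exact (left_eq_add.mp h)

lemma D_zero_right (m : ℕ) : R.D m (0 : V) = 0 := R.mul_zero_left' _ _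

lemma D_zero' (u : V) : R.D 0 u = u := by
  have : (-(0:ℕ) - 1 : ℤ) = -1 := by norm_num
  rw [VertexRing.D, this, R.vac_create]

lemma mul_one_eq_D (n : ℤ) (m : ℕ) (u : V) (hn : n = -(m:ℤ) - 1) :
    R.mul n u R.one = R.D m u := by rw [hn]; rfl

end VertexRing

namespace VertexRing

variable {V : Type*} [AddCommGroup V] (R : VertexRing V)

/-- Skew-symmetry in component form. -/
theorem skw (t : ℤ) (u v : V) :
    (∑ᶠ i : ℕ, ((-1:ℤ)) ^ i • R.D (i+1) (R.mul (t + (i:ℤ)) u v)) =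
      R.mul (t-1) u v - (((-1 : ℤˣ) ^ t : ℤˣ) : ℤ) • R.mul (t-1) v u := by
  have J := R.jacobi (-1) (-1) t u v R.one
  have hL : (∑ᶠ i : ℕ, ibin (-1) i • R.mul (-1 + -1 - (i:ℤ)) (R.mul (t + (i:ℤ)) u v) R.one)
      = ∑ᶠ i : ℕ, ((-1:ℤ)) ^ i • R.D (i+1) (R.mul (t + (i:ℤ)) u v) := by
    apply finsum_congr; intro i
    rw [VRaux_ibin_neg_one, R.mul_one_eq_D _ (i+1) _ (by push_cast; ring)]
  have hR : (∑ᶠ i : ℕ, ((-1:ℤ) ^ i * ibin t i) •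
        (R.mul (-1 + t - (i:ℤ)) u (R.mul (-1 + (i:ℤ)) v R.one)
          - (((-1 : ℤˣ) ^ t : ℤˣ) : ℤ) • R.mul (-1 + t - (i:ℤ)) v (R.mul (-1 + (i:ℤ)) u R.one)))
      = R.mul (t-1) u v - (((-1 : ℤˣ) ^ t : ℤˣ) : ℤ) • R.mul (t-1) v u := by
    rw [finsum_eq_single _ 0 ?_]
    · have e1 : (-1 : ℤ) + t - ((0:ℕ):ℤ) = t - 1 := by push_cast; ring
      have e2 : (-1 : ℤ) + ((0:ℕ):ℤ) = -1 := by norm_num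
      rw [e1, e2, R.vac_create, R.vac_create, VRaux_ibin_zero_right]
      norm_num
    · intro x hx
      have hx' : (1:ℤ) ≤ (x:ℤ) := by exact_mod_cast Nat.one_le_iff_ne_zero.mpr hx
      rw [R.vac_ann v _ (by omega), R.vac_ann u _ (by omega), R.mul_zero_right',
        R.mul_zero_right', smul_zero, sub_zero, smul_zero]
  rw [hL, hR] at J
  exact J

/-- `D m 𝟙 = 0` for `m ≥ 1`. -/
theorem D_one_eq_zero : ∀ m : ℕ, 1 ≤ m → R.D m R.one = 0 := by
  intro m
  induction m using Nat.strong_induction_on with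
  | _ m IH =>
    intro hm
    have S := R.skw (-(m:ℤ)) R.one R.one
    rw [finsum_eq_single _ (m-1) ?_] at S
    · have e1 : (-(m:ℤ) + ((m-1:ℕ):ℤ)) = -1 := by omega
      rw [e1, show (m-1+1) = m from by omega, R.vac_create] at S
      rw [R.mul_one_eq_D _ m _ (by ring)] at S
      rw [VRaux_neg_one_zpow_neg_natCast] at S
      rcases Nat.even_or_odd m with he | ho
      · have h1 : Odd (m-1) := by
          rcases he with ⟨k, hk⟩; exact ⟨k-1, by omega⟩
        rw [h1.neg_one_pow, he.neg_one_pow, neg_one_smul, one_smul, sub_self] at S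
        exact neg_eq_zero.mp S
      · have h1 : Even (m-1) := by
          rcases ho with ⟨k, hk⟩; exact ⟨k, by omega⟩
        rw [h1.neg_one_pow, ho.neg_one_pow, one_smul, neg_one_smul, sub_neg_eq_add] at S
        exact (left_eq_add.mp S)
    · intro x hx
      by_cases hxm : m ≤ x
      · rw [R.vac_ann _ _ (by omega), R.D_zero_right, smul_zero]
      · rw [R.mul_one_eq_D _ (m-1-x) _ (by omega), IH (m-1-x) (by omega) (by omega),
          R.D_zero_right, smul_zero]

/-- Hasse–Schmidt Leibniz rule specialization (`★`). -/
theorem star (k : ℕ) (t : ℤ) (u v : V) :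
    R.D k (R.mul t u v) =
      ∑ i ∈ Finset.range (k+1), ((-1:ℤ) ^ i * ibin t i) • R.mul (t - (i:ℤ)) u (R.D (k-i) v) := by
  have J := R.jacobi 0 (-1-(k:ℤ)) t u v R.one
  rw [finsum_eq_single _ 0 (fun x hx => by rw [VRaux_ibin_zero_left, if_neg hx, zero_smul])] at J
  rw [VRaux_ibin_zero_left, if_pos rfl, one_smul] at J
  have e1 : (0 + (-1-(k:ℤ)) - ((0:ℕ):ℤ)) = -(k:ℤ) - 1 := by push_cast; ring
  have e2 : t + ((0:ℕ):ℤ) = t := by push_cast; ring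
  rw [e1, e2, R.mul_one_eq_D _ k _ rfl] at J
  rw [J]
  have hcongr : ∀ i : ℕ, ((-1:ℤ) ^ i * ibin t i) •
        (R.mul (0 + t - (i:ℤ)) u (R.mul (-1-(k:ℤ) + (i:ℤ)) v R.one)
          - (((-1 : ℤˣ) ^ t : ℤˣ) : ℤ) • R.mul ((-1-(k:ℤ)) + t - (i:ℤ)) v (R.mul (0 + (i:ℤ)) u R.one))
      = ((-1:ℤ) ^ i * ibin t i) • R.mul (0 + t - (i:ℤ)) u (R.mul (-1-(k:ℤ) + (i:ℤ)) v R.one) := by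
    intro i
    rw [R.vac_ann u _ (by omega), R.mul_zero_right', smul_zero, sub_zero]
  rw [finsum_congr hcongr]
  rw [finsum_eq_finset_sum_of_support_subset _ (s := Finset.range (k+1)) ?_]
  · apply Finset.sum_congr rfl
    intro i hi
    have hik : i ≤ k := by simpa [Nat.lt_succ_iff] using Finset.mem_range.mp hi
    have e3 : (0 : ℤ) + t - (i:ℤ) = t - (i:ℤ) := by ring
    rw [e3, R.mul_one_eq_D _ (k-i) _ (by omega)]
  · intro x hx
    simp only [Function.mem_support] at hx
    simp only [Finset.coe_range, Set.mem_Iio, Nat.lt_succ_iff]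
    by_contra hxk
    push_neg at hxk
    exact hx (by rw [R.vac_ann v _ (by omega), R.mul_zero_right', smul_zero])

/-- Composition rule for the Hasse–Schmidt derivations. -/
theorem Dcomp (p q : ℕ) (w : V) :
    R.D p (R.D q w) = (((p+q).choose p : ℕ) : ℤ) • R.D (p+q) w := by
  have hD : R.D q w = R.mul (-1 - (q:ℤ)) w R.one := (R.mul_one_eq_D _ q _ (by ring)).symm
  rw [hD, R.star p (-1-(q:ℤ)) w R.one]
  rw [Finset.sum_eq_single_of_mem p (Finset.self_mem_range_succ p) ?_]
  · rw [Nat.sub_self, R.D_zero', VRaux_ibin_negSucc,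
      R.mul_one_eq_D _ (p+q) _ (by push_cast; ring),
      show ((-1:ℤ)^p * ((-1)^p * (((p+q).choose p : ℕ):ℤ))) = (((p+q).choose p : ℕ):ℤ) from by
        rw [← mul_assoc, ← mul_pow]; norm_num]
  · intro x hx hxp
    have hx' : x < p := by
      have := Finset.mem_range.mp hx; omega
    rw [R.D_one_eq_zero (p-x) (by omega), R.mul_zero_right', smul_zero]

end VertexRing

lemma VRaux_alt_sum (m : ℕ) (hm : 1 ≤ m) :
    (∑ i ∈ Finset.range m, (-1:ℤ)^i * (m.choose (i+1) : ℤ)) = 1 := by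
  have h0 := Int.alternating_sum_range_choose (n := m)
  rw [if_neg (by omega)] at h0
  rw [Finset.sum_range_succ'] at h0
  have hc : ∀ i ∈ Finset.range m, ((-1:ℤ))^(i+1) * (m.choose (i+1):ℤ)
      = -((-1:ℤ)^i * (m.choose (i+1):ℤ)) := by intro i _; ring
  rw [Finset.sum_congr rfl hc, Finset.sum_neg_distrib] at h0
  simp only [pow_zero, Nat.choose_zero_right, Nat.cast_one, one_mul] at h0
  linarith

namespace VertexRing

variable {V : Type*} [AddCommGroup V] (R : VertexRing V)

/-- Left action of the vacuum: `𝟙(n)w = δ_{n,-1} w`. -/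
theorem one_mul'' (n : ℤ) (w : V) : R.mul n R.one w = if n = -1 then w else 0 := by
  have S := R.skw (n+1) w R.one
  rw [show n + 1 - 1 = n from by ring] at S
  by_cases hn : n = -1
  · subst hn
    have hLz : ∀ i : ℕ, (-1:ℤ)^i • R.D (i+1) (R.mul (-1 + 1 + (i:ℤ)) w R.one) = 0 := by
      intro i
      rw [R.vac_ann _ _ (by omega), R.D_zero_right, smul_zero]
    rw [finsum_eq_single _ 0 (fun x _ => hLz x), hLz 0, R.vac_create] at S
    have hε : (((-1:ℤˣ)^((-1:ℤ)+1) : ℤˣ) : ℤ) = 1 := by norm_num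
    rw [hε, one_smul] at S
    rw [if_pos rfl]
    exact (sub_eq_zero.mp S.symm).symm
  · rw [if_neg hn]
    rcases lt_or_ge n (-1) with hlt | hge
    · set m := (-1-n).toNat with hmdef
      have hm1 : 1 ≤ m := by omega
      have hL : (∑ᶠ i : ℕ, (-1:ℤ)^i • R.D (i+1) (R.mul (n + 1 + (i:ℤ)) w R.one)) = R.D m w := by
        rw [finsum_eq_finset_sum_of_support_subset _ (s := Finset.range m) ?_]
        · have hc : ∀ i ∈ Finset.range m,
              (-1:ℤ)^i • R.D (i+1) (R.mul (n + 1 + (i:ℤ)) w R.one)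
                = ((-1:ℤ)^i * ((m.choose (i+1) : ℕ) : ℤ)) • R.D m w := by
            intro i hi
            have hi' : i < m := Finset.mem_range.mp hi
            rw [R.mul_one_eq_D _ (m-1-i) _ (by omega), R.Dcomp (i+1) (m-1-i) w,
              show (i+1)+(m-1-i) = m from by omega, smul_smul]
          rw [Finset.sum_congr rfl hc, ← Finset.sum_smul, VRaux_alt_sum m hm1, one_smul]
        · intro x hx
          simp only [Function.mem_support] at hx
          simp only [Finset.coe_range, Set.mem_Iio]
          by_contra hxm
          push_neg at hxm
          exact hx (by rw [R.vac_ann _ _ (by omega), R.D_zero_right, smul_zero])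
      rw [hL, R.mul_one_eq_D _ m _ (by omega)] at S
      exact VRaux_unit_smul_eq_zero _ _ (sub_eq_self.mp S.symm)
    · have hn0 : (0:ℤ) ≤ n := by omega
      have hLz : ∀ i : ℕ, (-1:ℤ)^i • R.D (i+1) (R.mul (n + 1 + (i:ℤ)) w R.one) = 0 := by
        intro i
        rw [R.vac_ann _ _ (by omega), R.D_zero_right, smul_zero]
      rw [finsum_eq_single _ 0 (fun x _ => hLz x), hLz 0, R.vac_ann _ _ hn0, zero_sub] at S
      exact VRaux_unit_smul_eq_zero _ _ (neg_eq_zero.mp S.symm)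

/-- Translation identity at `s = -1`: `(D_j u)(-1) = u(-1-j)`. -/
theorem trans1 (j : ℕ) (u w : V) :
    R.mul (-1) (R.mul (-1-(j:ℤ)) u R.one) w = R.mul (-1-(j:ℤ)) u w := by
  have J := R.jacobi 0 (-1) (-1-(j:ℤ)) u R.one w
  rw [finsum_eq_single _ 0 (fun x hx => by rw [VRaux_ibin_zero_left, if_neg hx, zero_smul])] at J
  rw [VRaux_ibin_zero_left, if_pos rfl, one_smul] at J
  rw [finsum_eq_single _ 0 ?_] at J
  · have e1 : (0:ℤ) + -1 - ((0:ℕ):ℤ) = -1 := by norm_num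
    have e2 : (-1-(j:ℤ) + ((0:ℕ):ℤ)) = -1-(j:ℤ) := by norm_num
    have e3 : (0:ℤ) + (-1-(j:ℤ)) - ((0:ℕ):ℤ) = -1-(j:ℤ) := by push_cast; ring
    have e4 : (-1:ℤ) + ((0:ℕ):ℤ) = -1 := by norm_num
    have e5 : (-1:ℤ) + (-1-(j:ℤ)) - ((0:ℕ):ℤ) = -2-(j:ℤ) := by push_cast; ring
    rw [e1, e2, e3, e4, e5, R.one_mul'' (-1) w, if_pos rfl,
      R.one_mul'' (-2-(j:ℤ)), if_neg (by omega), VRaux_ibin_zero_right] at J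
    simpa using J
  · intro x hx
    have hx1 : 1 ≤ x := Nat.one_le_iff_ne_zero.mpr hx
    have i1 : R.mul (-1 + (x:ℤ)) R.one w = 0 := by
      rw [R.one_mul'', if_neg (by omega)]
    have i2 : R.mul (-1 + (-1-(j:ℤ)) - (x:ℤ)) R.one (R.mul (0 + (x:ℤ)) u w) = 0 := by
      rw [R.one_mul'', if_neg (by omega)]
    rw [i1, i2, R.mul_zero_right', smul_zero, sub_zero, smul_zero]

end VertexRing

namespace VertexRing

variable {V : Type*} [AddCommGroup V] (R : VertexRing V)

/-- Commutation: if `u(i)v = 0` for all `i ≥ 0` then all modes of `u` and `v` commute. -/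
theorem pcomm (u v : V) (hp : ∀ i : ℤ, 0 ≤ i → R.mul i u v = 0) (r s : ℤ) (w : V) :
    R.mul r u (R.mul s v w) = R.mul s v (R.mul r u w) := by
  have J := R.jacobi r s 0 u v w
  have hLz : ∀ i : ℕ, ibin r i • R.mul (r + s - (i:ℤ)) (R.mul (0 + (i:ℤ)) u v) w = 0 := by
    intro i
    rw [hp (0 + (i:ℤ)) (by omega), R.mul_zero_left', smul_zero]
  have hL : (∑ᶠ i : ℕ, ibin r i • R.mul (r + s - (i:ℤ)) (R.mul (0 + (i:ℤ)) u v) w) = 0 := by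
    rw [finsum_congr hLz, finsum_zero]
  rw [hL] at J
  rw [finsum_eq_single _ 0 (fun x hx => by
    rw [VRaux_ibin_zero_left, if_neg hx, mul_zero, zero_smul])] at J
  have hε : (((-1:ℤˣ)^(0:ℤ) : ℤˣ) : ℤ) = 1 := by norm_num
  rw [VRaux_ibin_zero_left, if_pos rfl, hε, one_smul] at J
  simp only [pow_zero, one_mul, Nat.cast_zero, add_zero, sub_zero, one_smul] at J
  exact sub_eq_zero.mp J.symm

/-- The key family of relations derived from the Jacobi identity for a
"unit pair" `(u,v)`. -/
theorem pGrel (u v : V) (huv : ∀ n : ℤ, R.mul n u v = if n = -1 then R.one else 0)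
    (j : ℕ) (r s : ℤ) (w : V) (hr : ∀ i : ℕ, R.mul (r + (i:ℤ)) u w = 0) :
    (∑ᶠ i : ℕ, (((i+j).choose i : ℕ) : ℤ) • R.mul (r - 1 - (j:ℤ) - (i:ℤ)) u (R.mul (s + (i:ℤ)) v w))
      = if r + s = (j:ℤ) - 1 then ibin r j • w else 0 := by
  have J := R.jacobi r s (-1-(j:ℤ)) u v w
  rw [finsum_eq_single _ j (fun x hx => by
    rw [show R.mul (-1-(j:ℤ) + (x:ℤ)) u v = 0 from by rw [huv, if_neg (by omega)],
      R.mul_zero_left', smul_zero])] at J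
  rw [show (-1-(j:ℤ) + (j:ℤ)) = -1 from by ring, huv, if_pos rfl, R.one_mul''] at J
  have hcongr : ∀ i : ℕ, ((-1:ℤ)^i * ibin (-1-(j:ℤ)) i) •
      (R.mul (r + (-1-(j:ℤ)) - (i:ℤ)) u (R.mul (s + (i:ℤ)) v w)
        - (((-1 : ℤˣ) ^ (-1-(j:ℤ)) : ℤˣ) : ℤ) • R.mul (s + (-1-(j:ℤ)) - (i:ℤ)) v (R.mul (r + (i:ℤ)) u w))
      = (((i+j).choose i : ℕ) : ℤ) • R.mul (r - 1 - (j:ℤ) - (i:ℤ)) u (R.mul (s + (i:ℤ)) v w) := by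
    intro i
    rw [hr i, R.mul_zero_right', smul_zero, sub_zero, VRaux_ibin_negSucc,
      show r + (-1-(j:ℤ)) - (i:ℤ) = r - 1 - (j:ℤ) - (i:ℤ) from by ring,
      ← mul_assoc, ← mul_pow]
    norm_num
  rw [finsum_congr hcongr] at J
  rw [← J]
  by_cases hc : r + s = (j:ℤ) - 1
  · rw [if_pos hc, if_pos (by omega)]
  · rw [if_neg hc, if_neg (by omega), smul_zero]

/-- Orthogonality: `u(m)(v(p)w) = 0` unless `m + p = -2`. -/
theorem pTvan (u v : V) (huv : ∀ n : ℤ, R.mul n u v = if n = -1 then R.one else 0)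
    (m p : ℤ) (w : V) (hmp : m + p ≠ -2) :
    R.mul m u (R.mul p v w) = 0 := by
  obtain ⟨Na, hNa0, hNa⟩ := R.trunc u w
  obtain ⟨Nb, hNb0, hNb⟩ := R.trunc v w
  set c := m + p with hc
  have key : ∀ k : ℕ, ∀ q : ℤ, Nb ≤ q + k → R.mul (c - q) u (R.mul q v w) = 0 := by
    intro k
    induction k with
    | zero =>
      intro q hq
      rw [hNb q (by omega), R.mul_zero_right']
    | succ k IH =>
      intro q hq
      by_cases hq' : Nb ≤ q + k
      · exact IH q hq'
      · set j := (Na - c - 1 + q).toNat with hj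
        set r := c + 1 + (j:ℤ) - q with hrdef
        have hr : ∀ i : ℕ, R.mul (r + (i:ℤ)) u w = 0 := by
          intro i; apply hNa; omega
        have G := R.pGrel u v huv j r q w hr
        rw [if_neg (by omega)] at G
        rw [finsum_eq_single _ 0 (fun x hx => by
          have hx1 : 1 ≤ x := Nat.one_le_iff_ne_zero.mpr hx
          rw [show r - 1 - (j:ℤ) - (x:ℤ) = c - (q + (x:ℤ)) from by omega,
            IH (q + (x:ℤ)) (by omega), smul_zero])] at G
        rw [show r - 1 - (j:ℤ) - ((0:ℕ):ℤ) = c - q from by omega,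
          show q + ((0:ℕ):ℤ) = q from by norm_num,
          show (((0+j).choose 0 : ℕ) : ℤ) = 1 from by simp, one_smul] at G
        exact G
  have hfin := key (Nb - p).toNat p (by omega)
  rw [show c - p = m from by omega] at hfin
  exact hfin

/-- `D_k u = 0` for `k ≥ 1`, for a unit pair. -/
theorem pDvan (u v : V) (huv : ∀ n : ℤ, R.mul n u v = if n = -1 then R.one else 0)
    (k : ℕ) (hk : 1 ≤ k) : R.mul (-1 - (k:ℤ)) u R.one = 0 := by
  have hp0 : ∀ i : ℤ, 0 ≤ i → R.mul i u v = 0 := fun i hi => by rw [huv, if_neg (by omega)]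
  set x := R.mul (-1 - (k:ℤ)) u R.one with hx
  obtain ⟨Na, hNa0, hNa⟩ := R.trunc u x
  have hr : ∀ i : ℕ, R.mul (Na + (i:ℤ)) u x = 0 := fun i => hNa _ (by omega)
  have G := R.pGrel u v huv 0 Na (-1 - Na) x hr
  rw [if_pos (by push_cast; ring), VRaux_ibin_zero_right, one_smul] at G
  have hz : ∀ i : ℕ, (((i+0).choose i : ℕ) : ℤ) •
      R.mul (Na - 1 - ((0:ℕ):ℤ) - (i:ℤ)) u (R.mul (-1 - Na + (i:ℤ)) v x) = 0 := by
    intro i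
    have hinner : R.mul (-1 - Na + (i:ℤ)) v x = 0 := by
      rw [hx, ← R.pcomm u v hp0 (-1-(k:ℤ)) (-1 - Na + (i:ℤ)) R.one]
      by_cases hpk : (-1 - Na + (i:ℤ)) = (k:ℤ) - 1
      · rw [hpk, R.vac_ann v _ (by omega), R.mul_zero_right']
      · exact R.pTvan u v huv _ _ _ (by omega)
    rw [hinner, R.mul_zero_right', smul_zero]
  rw [finsum_eq_single _ 0 (fun i _ => hz i), hz 0] at G
  exact G.symm

/-- Negative modes vanish. -/
theorem pnegvan (u : V) (hD : ∀ k : ℕ, 1 ≤ k → R.mul (-1-(k:ℤ)) u R.one = 0)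
    (n : ℤ) (hn : n ≤ -2) (w : V) : R.mul n u w = 0 := by
  set j := (-1-n).toNat with hj
  have hj1 : 1 ≤ j := by omega
  have hnj : n = -1 - (j:ℤ) := by omega
  rw [hnj, ← R.trans1 j u w, hD j hj1, R.mul_zero_left']

/-- `u(-1)` and `v(-1)` are mutually inverse. -/
theorem pinv (u v : V) (huv : ∀ n : ℤ, R.mul n u v = if n = -1 then R.one else 0)
    (hnegu : ∀ n : ℤ, n ≤ -2 → ∀ w : V, R.mul n u w = 0)
    (hnegv : ∀ n : ℤ, n ≤ -2 → ∀ w : V, R.mul n v w = 0)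
    (w : V) : R.mul (-1) u (R.mul (-1) v w) = w := by
  obtain ⟨Na, hNa0, hNa⟩ := R.trunc u w
  have hr : ∀ i : ℕ, R.mul (Na + (i:ℤ)) u w = 0 := fun i => hNa _ (by omega)
  have G := R.pGrel u v huv 0 Na (-1-Na) w hr
  rw [if_pos (by push_cast; ring), VRaux_ibin_zero_right, one_smul] at G
  rw [finsum_eq_single _ Na.toNat (fun x hx => by
    rcases lt_or_ge (x:ℤ) Na with hlt | hge
    · rw [hnegv (-1 - Na + (x:ℤ)) (by omega) w, R.mul_zero_right', smul_zero]
    · rw [hnegu (Na - 1 - ((0:ℕ):ℤ) - (x:ℤ)) (by omega) _, smul_zero])] at G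
  rw [show Na - 1 - ((0:ℕ):ℤ) - ((Na.toNat:ℕ):ℤ) = -1 from by omega,
    show -1 - Na + ((Na.toNat:ℕ):ℤ) = -1 from by omega,
    show (((Na.toNat + 0).choose Na.toNat : ℕ) : ℤ) = 1 from by simp, one_smul] at G
  exact G

end VertexRing

/-- If `Y(a,z)b = 𝟙`, i.e. `a(n)b = δ_{n,-1}𝟙`, then also `b(n)a = δ_{n,-1}𝟙`
and both `a` and `b` lie in the center. -/
theorem unit_symmetric_and_central {V : Type*} [AddCommGroup V] (R : VertexRing V) (a b : V)
    (h : ∀ n : ℤ, R.mul n a b = if n = -1 then R.one else 0) :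
    (∀ n : ℤ, R.mul n b a = if n = -1 then R.one else 0) ∧
    a ∈ R.center ∧ b ∈ R.center := by
  have hba : ∀ n : ℤ, R.mul n b a = if n = -1 then R.one else 0 := by
    intro n
    have S := R.skw (n+1) a b
    rw [show n+1-1 = n from by ring] at S
    have hLz : ∀ i : ℕ, (-1:ℤ)^i • R.D (i+1) (R.mul (n+1+(i:ℤ)) a b) = 0 := by
      intro i
      rw [h (n+1+(i:ℤ))]
      by_cases hc : n+1+(i:ℤ) = -1
      · rw [if_pos hc, R.D_one_eq_zero (i+1) (by omega), smul_zero]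
      · rw [if_neg hc, R.D_zero_right, smul_zero]
    rw [finsum_eq_single _ 0 (fun x _ => hLz x), hLz 0, h n] at S
    by_cases hn : n = -1
    · subst hn
      rw [if_pos rfl] at S
      rw [if_pos rfl]
      have hε : (((-1:ℤˣ)^((-1:ℤ)+1) : ℤˣ) : ℤ) = 1 := by norm_num
      rw [hε, one_smul] at S
      exact (sub_eq_zero.mp S.symm).symm
    · rw [if_neg hn] at S
      rw [if_neg hn]
      rw [zero_sub] at S
      exact VRaux_unit_smul_eq_zero _ _ (neg_eq_zero.mp S.symm)
  have hDa : ∀ k : ℕ, 1 ≤ k → R.mul (-1-(k:ℤ)) a R.one = 0 := R.pDvan a b h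
  have hDb : ∀ k : ℕ, 1 ≤ k → R.mul (-1-(k:ℤ)) b R.one = 0 := R.pDvan b a hba
  have hnega : ∀ n : ℤ, n ≤ -2 → ∀ w : V, R.mul n a w = 0 :=
    fun n hn w => R.pnegvan a hDa n hn w
  have hnegb : ∀ n : ℤ, n ≤ -2 → ∀ w : V, R.mul n b w = 0 :=
    fun n hn w => R.pnegvan b hDb n hn w
  refine ⟨hba, ?_, ?_⟩
  · intro n hn w
    have hw : R.mul (-1) b (R.mul (-1) a w) = w := R.pinv b a hba hnegb hnega w
    rw [← hw]
    exact R.pTvan a b h n (-1) _ (by omega)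
  · intro n hn w
    have hw : R.mul (-1) a (R.mul (-1) b w) = w := R.pinv a b h hnega hnegb w
    rw [← hw]
    exact R.pTvan b a hba n (-1) _ (by omega)
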